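/- Let F be a field of characteristic 2 and L/F an extension of degree 4 with a² ∈ F for all a ∈ L. Let a, b ∈ L be linearly independent over F. Then a⊗b + b⊗a is a nonzero element of Π = ker π, and it lies in the L-span of {1⊗a, 1⊗b} inside L ⊗_F L. (Geometrically: the extension of the line Fa ⊕ Fb meets the absolute plane at the point L(a⊗b + b⊗a).) -/

import Mathlib

open TensorProduct

theorem stmt12 (F L : Type*) [Field F] [Field L] [Algebra F L] [CharP F 2]
    (hdim : Module.finrank F L = 4)
    (hsq : ∀ a : L, ∃ f : F, algebraMap F L f = a ^ 2) (π : (L ⊗[F] L) →ₐ[L] L) (hπ : ∀ x y : L, π (x ⊗ₜ[F] y) = x * y) (a b : L) (hab : LinearIndependent F ![a, b]) :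
    a ⊗ₜ[F] b + b ⊗ₜ[F] a ≠ 0 ∧
    π (a ⊗ₜ[F] b + b ⊗ₜ[F] a) = 0 ∧
    a ⊗ₜ[F] b + b ⊗ₜ[F] a ∈ Submodule.span L {1 ⊗ₜ[F] a, 1 ⊗ₜ[F] b} := by
  classical
  haveI : CharP L 2 := charP_of_injective_algebraMap (algebraMap F L).injective 2
  have ha0 : a ≠ 0 := by
    have := hab.ne_zero 0
    simpa using this
  have hne : a ≠ b := by
    intro h
    have := hab.injective (by simp [h] : ![a, b] 0 = ![a, b] 1)
    simp at this
  refine ⟨?_, ?_, ?_⟩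
  · -- nonzero
    intro hzero
    -- build a functional f : L →ₗ[F] F with f b = 1, f a = 0
    have hind : LinearIndepOn F id (Set.range ![a, b]) :=
      (linearIndepOn_id_range_iff hab.injective).mpr hab
    let B := Module.Basis.extend hind
    have haS : a ∈ hind.extend (Set.subset_univ _) :=
      hind.subset_extend _ ⟨0, rfl⟩
    have hbS : b ∈ hind.extend (Set.subset_univ _) :=
      hind.subset_extend _ ⟨1, rfl⟩
    let f : L →ₗ[F] F := B.coord ⟨b, hbS⟩
    have hfb : f b = 1 := by
      have : B ⟨b, hbS⟩ = b := Module.Basis.extend_apply_self hind ⟨b, hbS⟩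
      simpa [f, this] using B.repr_self_apply ⟨b, hbS⟩ ⟨b, hbS⟩
    have hfa : f a = 0 := by
      have h1 : B ⟨a, haS⟩ = a := Module.Basis.extend_apply_self hind ⟨a, haS⟩
      have h2 : (⟨a, haS⟩ : hind.extend (Set.subset_univ _)) ≠ ⟨b, hbS⟩ := by
        simp [Subtype.ext_iff, hne]
      calc f a = B.repr (B ⟨a, haS⟩) ⟨b, hbS⟩ := by rw [h1]; rfl
        _ = 0 := by rw [B.repr_self_apply]; simp [h2]
    let T : L ⊗[F] L →ₗ[F] L :=
      (TensorProduct.rid F L).toLinearMap ∘ₗ TensorProduct.map LinearMap.id f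
    have hT : ∀ x y : L, T (x ⊗ₜ[F] y) = f y • x := by
      intro x y; simp [T]
    have := congrArg T hzero
    rw [map_add, hT, hT, hfa, hfb, map_zero, one_smul, zero_smul, add_zero] at this
    exact ha0 this
  · rw [map_add, hπ, hπ, mul_comm b a, ← two_mul]
    simp [CharTwo.two_eq_zero]
  · have h1 : a ⊗ₜ[F] b = a • ((1 : L) ⊗ₜ[F] b) := by
      rw [TensorProduct.smul_tmul', smul_eq_mul, mul_one]
    have h2 : b ⊗ₜ[F] a = b • ((1 : L) ⊗ₜ[F] a) := by
      rw [TensorProduct.smul_tmul', smul_eq_mul, mul_one]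
    rw [h1, h2]
    exact Submodule.add_mem _
      (Submodule.smul_mem _ _ (Submodule.subset_span (Or.inr rfl)))
      (Submodule.smul_mem _ _ (Submodule.subset_span (Or.inl rfl)))
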